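/- Let T = {t₁ < t₂ < ... < t_m} be a nonempty finite set of positive integers and Δb ≥ 1. Define the greedy partition of T as follows: the first part consists of all elements of T in the interval [t₁, t₁ + Δb - 1]; remove them, and repeat on the remaining set. Then the greedy partition achieves the minimum possible number of parts among all partitions of T into subsets each contained in an interval of Δb consecutive integers. -/

import Mathlib

/-- The greedy partition of `T` with windows of length `d`: the first part
consists of all elements of `T` in `[min T, min T + d - 1]`; remove them and
repeat on the remaining set.  (For `d ≥ 1`, `max 1 d = d`.) -/
def greedyParts (d : ℕ) (T : Finset ℕ) : Finset (Finset ℕ) :=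
  if h : T.Nonempty then
    insert (T.filter fun t => t < T.min' h + max 1 d)
      (greedyParts d (T.filter fun t => T.min' h + max 1 d ≤ t))
  else ∅
termination_by T.card
decreasing_by
  exact Finset.card_lt_card <| Finset.filter_ssubset.mpr
    ⟨T.min' h, T.min'_mem h, by
      have : 0 < max 1 d := lt_of_lt_of_le one_pos (le_max_left 1 d)
      omega⟩

lemma greedyParts_eq (d : ℕ) (T : Finset ℕ) (h : T.Nonempty) :
    greedyParts d T = insert (T.filter fun t => t < T.min' h + max 1 d)
      (greedyParts d (T.filter fun t => T.min' h + max 1 d ≤ t)) := by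
  rw [greedyParts]
  simp [h]

lemma greedyParts_empty (d : ℕ) : greedyParts d ∅ = ∅ := by
  rw [greedyParts]; simp

lemma filter_ssub (d : ℕ) (T : Finset ℕ) (h : T.Nonempty) :
    (T.filter fun t => T.min' h + max 1 d ≤ t) ⊂ T :=
  Finset.filter_ssubset.mpr ⟨T.min' h, T.min'_mem h, by
    have : 0 < max 1 d := lt_of_lt_of_le one_pos (le_max_left 1 d); omega⟩

lemma greedyParts_subset (d : ℕ) : ∀ T : Finset ℕ, ∀ p ∈ greedyParts d T, p ⊆ T := by
  intro T
  induction T using Finset.strongInduction with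
  | _ T ih =>
    by_cases h : T.Nonempty
    · rw [greedyParts_eq d T h]
      intro p hp
      rcases Finset.mem_insert.mp hp with rfl | hp
      · exact Finset.filter_subset _ _
      · exact (ih _ (filter_ssub d T h) p hp).trans (Finset.filter_subset _ _)
    · rw [Finset.not_nonempty_iff_eq_empty.mp h, greedyParts_empty]
      simp

lemma greedyParts_biUnion (d : ℕ) : ∀ T : Finset ℕ, (greedyParts d T).biUnion id = T := by
  intro T
  induction T using Finset.strongInduction with
  | _ T ih =>
    by_cases h : T.Nonempty
    · rw [greedyParts_eq d T h, Finset.biUnion_insert, ih _ (filter_ssub d T h)]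
      ext t
      simp only [Finset.mem_union, Finset.mem_filter, id]
      constructor
      · rintro (⟨ht, _⟩ | ⟨ht, _⟩) <;> exact ht
      · intro ht
        rcases lt_or_ge t (T.min' h + max 1 d) with hlt | hle
        · exact Or.inl ⟨ht, hlt⟩
        · exact Or.inr ⟨ht, hle⟩
    · rw [Finset.not_nonempty_iff_eq_empty.mp h, greedyParts_empty]
      simp

lemma greedyParts_disjoint (d : ℕ) :
    ∀ T : Finset ℕ, ((greedyParts d T : Set (Finset ℕ))).PairwiseDisjoint id := by
  intro T
  induction T using Finset.strongInduction with
  | _ T ih =>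
    by_cases h : T.Nonempty
    · rw [greedyParts_eq d T h, Finset.coe_insert]
      apply Set.PairwiseDisjoint.insert (ih _ (filter_ssub d T h))
      intro q hq _
      have hq' : q ⊆ T.filter fun t => T.min' h + max 1 d ≤ t :=
        greedyParts_subset d _ q hq
      simp only [id]
      rw [Finset.disjoint_left]
      intro t ht htq
      have h1 := (Finset.mem_filter.mp ht).2
      have h2 := (Finset.mem_filter.mp (hq' htq)).2
      omega
    · rw [Finset.not_nonempty_iff_eq_empty.mp h, greedyParts_empty]
      simp

lemma greedyParts_windows (d : ℕ) :
    ∀ T : Finset ℕ, ∀ p ∈ greedyParts d T, ∃ a, p ⊆ Finset.Icc a (a + max 1 d - 1) := by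
  intro T
  induction T using Finset.strongInduction with
  | _ T ih =>
    by_cases h : T.Nonempty
    · rw [greedyParts_eq d T h]
      intro p hp
      rcases Finset.mem_insert.mp hp with rfl | hp
      · refine ⟨T.min' h, fun t ht => ?_⟩
        have h1 := (Finset.mem_filter.mp ht).2
        have h2 := T.min'_le t (Finset.mem_filter.mp ht).1
        have hM : 1 ≤ max 1 d := le_max_left 1 d
        rw [Finset.mem_Icc]; omega
      · exact ih _ (filter_ssub d T h) p hp
    · rw [Finset.not_nonempty_iff_eq_empty.mp h, greedyParts_empty]
      simp

lemma greedy_opt (d : ℕ) : ∀ T : Finset ℕ, ∀ parts : Finset (Finset ℕ),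
    parts.biUnion id = T →
    (parts : Set (Finset ℕ)).PairwiseDisjoint id →
    (∀ p ∈ parts, ∃ a, p ⊆ Finset.Icc a (a + max 1 d - 1)) →
    (greedyParts d T).card ≤ parts.card := by
  intro T
  induction T using Finset.strongInduction with
  | _ T ih =>
    intro parts hbu hdisj hwin
    by_cases h : T.Nonempty
    case neg =>
      rw [Finset.not_nonempty_iff_eq_empty.mp h, greedyParts_empty]
      simp
    set M := max 1 d with hMdef
    have hM : 1 ≤ M := le_max_left 1 d
    set m := T.min' h with hmdef
    set c := m + M with hcdef
    set T' := T.filter (fun t => c ≤ t) with hT'def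
    -- p0 : the part containing m
    obtain ⟨p0, hp0, hmp0⟩ : ∃ p ∈ parts, m ∈ p := by
      have hmT : m ∈ parts.biUnion id := by rw [hbu]; exact T.min'_mem h
      simpa using hmT
    obtain ⟨a, ha⟩ := hwin p0 hp0
    have hp0lt : ∀ t ∈ p0, t < c := by
      intro t ht
      have h1 := Finset.mem_Icc.mp (ha ht)
      have h2 := Finset.mem_Icc.mp (ha hmp0)
      omega
    set f : Finset ℕ → Finset ℕ := fun p => p.filter (fun t => c ≤ t) with hfdef
    set parts' := (parts.filter fun p => (f p).Nonempty).image f with hparts'def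
    have hinj : Set.InjOn f ↑(parts.filter fun p => (f p).Nonempty) := by
      intro p hp q hq hfe
      simp only [Finset.coe_filter, Set.mem_setOf_eq] at hp hq
      by_contra hpq
      have hd2 := hdisj (Finset.mem_coe.mpr hp.1) (Finset.mem_coe.mpr hq.1) hpq
      obtain ⟨x, hx⟩ := hp.2
      have hxq : x ∈ f q := hfe ▸ hx
      exact (Finset.disjoint_left.mp hd2 (Finset.mem_filter.mp hx).1)
        (Finset.mem_filter.mp hxq).1
    have hcard' : parts'.card = (parts.filter fun p => (f p).Nonempty).card :=
      Finset.card_image_of_injOn hinj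
    -- parts' is a valid partition of T'
    have hbu' : parts'.biUnion id = T' := by
      ext t
      simp only [hparts'def, Finset.mem_biUnion, Finset.mem_image, Finset.mem_filter,
        hT'def, id, hfdef]
      constructor
      · rintro ⟨q, ⟨p, ⟨hp, -⟩, rfl⟩, htq⟩
        obtain ⟨htp, htc⟩ := Finset.mem_filter.mp htq
        have : t ∈ parts.biUnion id := Finset.mem_biUnion.mpr ⟨p, hp, htp⟩
        rw [hbu] at this
        exact ⟨this, htc⟩
      · rintro ⟨htT, htc⟩
        have : t ∈ parts.biUnion id := by rw [hbu]; exact htT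
        obtain ⟨p, hp, htp⟩ := Finset.mem_biUnion.mp this
        refine ⟨p.filter (fun t => c ≤ t), ⟨p, ⟨hp, ⟨t, ?_⟩⟩, rfl⟩, ?_⟩ <;>
          exact Finset.mem_filter.mpr ⟨htp, htc⟩
    have hdisj' : (parts' : Set (Finset ℕ)).PairwiseDisjoint id := by
      intro A hA B hB hAB
      simp only [hparts'def, Finset.coe_image, Set.mem_image, Finset.mem_coe,
        Finset.mem_filter] at hA hB
      obtain ⟨p, ⟨hp, -⟩, rfl⟩ := hA
      obtain ⟨q, ⟨hq, -⟩, rfl⟩ := hB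
      have hpq : p ≠ q := fun e => hAB (by rw [e])
      have hd2 := hdisj (Finset.mem_coe.mpr hp) (Finset.mem_coe.mpr hq) hpq
      simp only [Function.onFun, id] at hd2 ⊢
      exact hd2.mono (Finset.filter_subset _ _) (Finset.filter_subset _ _)
    have hwin' : ∀ p ∈ parts', ∃ a, p ⊆ Finset.Icc a (a + M - 1) := by
      intro A hA
      simp only [hparts'def, Finset.mem_image, Finset.mem_filter] at hA
      obtain ⟨p, ⟨hp, -⟩, rfl⟩ := hA
      obtain ⟨a, ha⟩ := hwin p hp
      exact ⟨a, (Finset.filter_subset _ _).trans ha⟩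
    have hT'ss : T' ⊂ T := filter_ssub d T h
    have hrec := ih T' hT'ss parts' hbu' hdisj' hwin'
    -- p0 not in the filtered set
    have hp0not : p0 ∉ parts.filter fun p => (f p).Nonempty := by
      simp only [Finset.mem_filter, not_and]
      intro _
      rw [Finset.not_nonempty_iff_eq_empty, Finset.filter_eq_empty_iff]
      intro t ht
      have := hp0lt t ht
      omega
    have hsub : (parts.filter fun p => (f p).Nonempty) ⊆ parts.erase p0 := by
      intro p hp
      have hpmem := (Finset.mem_filter.mp hp).1
      refine Finset.mem_erase.mpr ⟨?_, hpmem⟩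
      rintro rfl
      exact hp0not hp
    have hcard2 : (parts.filter fun p => (f p).Nonempty).card ≤ parts.card - 1 := by
      have := Finset.card_le_card hsub
      rw [Finset.card_erase_of_mem hp0] at this
      exact this
    have hpc : 1 ≤ parts.card := Finset.card_pos.mpr ⟨p0, hp0⟩
    rw [greedyParts_eq d T h]
    calc (insert (T.filter fun t => t < T.min' h + max 1 d)
          (greedyParts d (T.filter fun t => T.min' h + max 1 d ≤ t))).card
        ≤ (greedyParts d (T.filter fun t => T.min' h + max 1 d ≤ t)).card + 1 :=
          Finset.card_insert_le _ _
      _ = (greedyParts d T').card + 1 := rfl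
      _ ≤ parts'.card + 1 := by omega
      _ ≤ parts.card := by omega

/-- The greedy partition is a valid partition of `T` into parts contained in
intervals of `Δb` consecutive integers, and it achieves the minimum possible
number of parts among all such partitions. -/
theorem stmt_13 (T : Finset ℕ) (hT : T.Nonempty) (hpos : ∀ t ∈ T, 0 < t)
    (Δb : ℕ) (hd : 1 ≤ Δb) :
    ((greedyParts Δb T).biUnion id = T ∧
      ((greedyParts Δb T : Set (Finset ℕ))).PairwiseDisjoint id ∧
      (∀ p ∈ greedyParts Δb T, ∃ a, p ⊆ Finset.Icc a (a + Δb - 1))) ∧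
    ∀ parts : Finset (Finset ℕ),
      parts.biUnion id = T →
      (parts : Set (Finset ℕ)).PairwiseDisjoint id →
      (∀ p ∈ parts, ∃ a, p ⊆ Finset.Icc a (a + Δb - 1)) →
      (greedyParts Δb T).card ≤ parts.card := by
  have hM : max 1 Δb = Δb := max_eq_right hd
  refine ⟨⟨greedyParts_biUnion Δb T, greedyParts_disjoint Δb T, ?_⟩, ?_⟩
  · intro p hp
    obtain ⟨a, ha⟩ := greedyParts_windows Δb T p hp
    rw [hM] at ha
    exact ⟨a, ha⟩
  · intro parts h1 h2 h3
    exact greedy_opt Δb T parts h1 h2 (by rw [hM]; exact h3)
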